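/- Suppose every OWA vector λ^v is nonnegative and non-increasing. Then the total score function sco is monotone and submodular on subsets of C: if S ⊆ S' ⊆ C then sco(S) ≤ sco(S'), and for every S ⊆ C and all distinct x, y ∈ C \ S, sco(S ∪ {x}) + sco(S ∪ {y}) ≥ sco(S ∪ {x, y}) + sco(S). -/
import Mathlib


open Finset

/-- The score of a committee `S`: each voter `v` (with approval set `A v` and
OWA vector `lam v`) contributes `∑_{j=1}^{|A v ∩ S|} lam v j`. -/
def sco {C V : Type*} [Fintype V] [DecidableEq C]
    (A : V → Finset C) (lam : V → ℕ → ℚ) (S : Finset C) : ℚ :=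
  ∑ v : V, ∑ j ∈ Finset.Icc 1 ((A v ∩ S).card), lam v j

private lemma gsucc (lam : ℕ → ℚ) (n : ℕ) :
    ∑ j ∈ Finset.Icc 1 (n + 1), lam j = (∑ j ∈ Finset.Icc 1 n, lam j) + lam (n + 1) := by
  rw [Finset.sum_Icc_succ_top (by omega)]

private lemma card_inter_insert {C : Type*} [DecidableEq C] (Av S : Finset C) (x : C)
    (hx : x ∉ S) :
    (Av ∩ insert x S).card = (Av ∩ S).card + (if x ∈ Av then 1 else 0) := by
  by_cases h : x ∈ Av
  · rw [Finset.inter_insert_of_mem h, Finset.card_insert_of_notMem (by simp [hx]), if_pos h]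
  · rw [Finset.inter_insert_of_notMem h, if_neg h, Nat.add_zero]

/-- If every OWA vector is nonnegative and non-increasing, then the total score
function is monotone and submodular on subsets of the candidate set. -/
theorem stmt_1 {C V : Type*} [Fintype V] [DecidableEq C]
    (A : V → Finset C) (lam : V → ℕ → ℚ)
    (hnonneg : ∀ (v : V) (j : ℕ), 1 ≤ j → 0 ≤ lam v j)
    (hmono : ∀ (v : V) (j : ℕ), 1 ≤ j → lam v (j + 1) ≤ lam v j) :
    (∀ S S' : Finset C, S ⊆ S' → sco A lam S ≤ sco A lam S') ∧
      (∀ (S : Finset C) (x y : C), x ≠ y → x ∉ S → y ∉ S →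
        sco A lam (insert x S) + sco A lam (insert y S) ≥
          sco A lam (insert x (insert y S)) + sco A lam S) := by
  constructor
  · intro S S' hSS
    unfold sco
    apply Finset.sum_le_sum
    intro v _
    apply Finset.sum_le_sum_of_subset_of_nonneg
    · apply Finset.Icc_subset_Icc_right
      exact Finset.card_le_card (Finset.inter_subset_inter (Finset.Subset.refl _) hSS)
    · intro j hj _
      exact hnonneg v j (Finset.mem_Icc.mp hj).1
  · intro S x y hxy hxS hyS
    unfold sco
    rw [ge_iff_le, ← Finset.sum_add_distrib, ← Finset.sum_add_distrib]
    apply Finset.sum_le_sum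
    intro v _
    have hxyS : x ∉ insert y S := by simp [hxS, hxy]
    rw [card_inter_insert (A v) S x hxS, card_inter_insert (A v) S y hyS,
      card_inter_insert (A v) (insert y S) x hxyS, card_inter_insert (A v) S y hyS]
    set n := (A v ∩ S).card
    by_cases hx : x ∈ A v <;> by_cases hy : y ∈ A v <;>
        simp only [hx, hy, if_true, if_false, Nat.add_zero, gsucc] <;>
      linarith [hmono v (n + 1) (by omega : 1 ≤ n + 1)]
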